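/- Let G be an r-SPTG, ℓ a non-urgent location of Min and ℓ' a non-urgent location of Max. Then for all 0 ≤ ν < ν' ≤ r: Val_G(ℓ,ν) ≤ (ν'−ν)·π(ℓ) + Val_G(ℓ,ν') and Val_G(ℓ',ν) ≥ (ν'−ν)·π(ℓ') + Val_G(ℓ',ν') (inequalities in ℝ ∪ {−∞,+∞}). Equivalently, when the values are finite, the slope (Val_G(ℓ,ν') − Val_G(ℓ,ν))/(ν'−ν) is at least −π(ℓ) for Min's non-urgent locations and at most −π(ℓ') for Max's non-urgent locations. -/

import Mathlib

/-!
Common formalization of one-clock priced timed games (PTGs), following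
"Simple Priced Timed Games are not That Simple".
-/

namespace PTGPaper

/-- The three kinds of locations: locations of player Min, of player Max, and final locations. -/
inductive Owner : Type
  | min : Owner
  | max : Owner
  | final : Owner
deriving DecidableEq

/-- A transition of a one-clock priced timed game: a source location, a guard
(an interval with endpoints `lo`, `hi`, with openness flags `loOpen`, `hiOpen`),
a reset flag, a discrete price, and a target location. -/
structure PTrans (L : Type) where
  src : L
  lo : ℝ
  hi : ℝ
  loOpen : Bool
  hiOpen : Bool
  reset : Bool
  price : ℤ
  tgt : L

noncomputable instance {L : Type} : DecidableEq (PTrans L) := Classical.decEq _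

/-- Membership of a clock value in the guard of a transition. -/
def PTrans.memGuard {L : Type} (δ : PTrans L) (ν : ℝ) : Prop :=
  (if δ.loOpen then δ.lo < ν else δ.lo ≤ ν) ∧
  (if δ.hiOpen then ν < δ.hi else ν ≤ δ.hi)

/-- A one-clock priced timed game. -/
structure PTG where
  Loc : Type
  locFin : Fintype Loc
  locDec : DecidableEq Loc
  owner : Loc → Owner
  urgent : Loc → Bool
  M : ℕ
  trans : Finset (PTrans Loc)
  price : Loc → ℤ
  fcost : Loc → ℝ → ℝ

attribute [instance] PTG.locFin PTG.locDec

/-- A configuration: a location together with a clock valuation. -/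
abbrev PTG.Config (G : PTG) := G.Loc × ℝ

/-- `G.Move s s' t δ c` holds if from configuration `s`, waiting `t` time units and then
taking transition `δ` is legal, leads to configuration `s'` and costs `c`. -/
def PTG.Move (G : PTG) (s s' : G.Config) (t : ℝ) (δ : PTrans G.Loc) (c : ℝ) : Prop :=
  δ ∈ G.trans ∧ δ.src = s.1 ∧ 0 ≤ t ∧ (G.urgent s.1 = true → t = 0) ∧
  δ.memGuard (s.2 + t) ∧ s'.1 = δ.tgt ∧
  s'.2 = (if δ.reset then 0 else s.2 + t) ∧
  c = (δ.price : ℝ) + t * (G.price s.1 : ℝ)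

/-- A finite play (history): an initial configuration followed by a list of steps,
each step consisting of a delay, the transition taken, and the configuration reached. -/
structure Hist (L : Type) where
  start : L × ℝ
  steps : List (ℝ × PTrans L × (L × ℝ))

namespace Hist

variable {L : Type}

def lastFrom (s : L × ℝ) : List (ℝ × PTrans L × (L × ℝ)) → L × ℝ
  | [] => s
  | (_, _, s') :: rest => lastFrom s' rest

/-- The last configuration of a finite play. -/
def last (h : Hist L) : L × ℝ := lastFrom h.start h.steps

def costFrom (π : L → ℤ) (s : L × ℝ) : List (ℝ × PTrans L × (L × ℝ)) → ℝ
  | [] => 0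
  | (t, δ, s') :: rest => ((δ.price : ℝ) + t * (π s.1 : ℝ)) + costFrom π s' rest

/-- The sum of the prices of the discrete transitions along a finite play. -/
def discSum (h : Hist L) : ℤ := (h.steps.map (fun st => st.2.1.price)).sum

/-- The prefix of a finite play consisting of its first `i` steps. -/
def take (h : Hist L) (i : ℕ) : Hist L := ⟨h.start, h.steps.take i⟩

end Hist

/-- Validity of a sequence of steps, starting from a given configuration. -/
def PTG.ValidFrom (G : PTG) : G.Config → List (ℝ × PTrans G.Loc × G.Config) → Prop
  | _, [] => True
  | s, (t, δ, s') :: rest => (∃ c, G.Move s s' t δ c) ∧ G.ValidFrom s' rest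

/-- A valid finite play of `G`. -/
def PTG.HistValid (G : PTG) (h : Hist G.Loc) : Prop :=
  0 ≤ h.start.2 ∧ h.start.2 ≤ (G.M : ℝ) ∧ G.ValidFrom h.start h.steps

/-- Accumulated cost of the moves of a finite play (without any final cost). -/
def PTG.accCost (G : PTG) (h : Hist G.Loc) : ℝ := Hist.costFrom G.price h.start h.steps

/-- A (deterministic) strategy, given as a function from finite plays to
a pair (delay, transition). -/
abbrev StratFun (L : Type) := Hist L → ℝ × PTrans L

/-- A finite play is consistent with strategy `σ` of the player owning locations of kind `P`
if at every step taken from a location of that player, the move is the one prescribed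
by `σ` on the corresponding prefix. -/
def PTG.Consistent (G : PTG) (P : Owner) (σ : StratFun G.Loc) (h : Hist G.Loc) : Prop :=
  ∀ (i : ℕ) (hi : i < h.steps.length),
    G.owner (h.take i).last.1 = P →
    ((h.steps.get ⟨i, hi⟩).1, (h.steps.get ⟨i, hi⟩).2.1) = σ (h.take i)

/-- A strategy of the player owning the locations of kind `P` is valid if it proposes
a legal move after every valid finite play ending in a location of that player. -/
def PTG.StratValid (G : PTG) (P : Owner) (σ : StratFun G.Loc) : Prop :=
  ∀ h : Hist G.Loc, G.HistValid h → G.owner h.last.1 = P →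
    ∃ s' c, G.Move h.last s' (σ h).1 (σ h).2 c

def PTG.MinValid (G : PTG) (σ : StratFun G.Loc) : Prop := G.StratValid Owner.min σ

def PTG.MaxValid (G : PTG) (τ : StratFun G.Loc) : Prop := G.StratValid Owner.max τ

/-- The configuration reached from `s` by the move `td = (delay, transition)`. -/
def PTG.nextCfg (G : PTG) (s : G.Config) (td : ℝ × PTrans G.Loc) : G.Config :=
  (td.2.tgt, if td.2.reset then 0 else s.2 + td.1)

/-- The finite play of length (at most) `n` obtained from initial configuration `s₀` when
Min plays `σ` and Max plays `τ` (the play stops growing when a final location is reached). -/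
def PTG.histOf (G : PTG) (σ τ : StratFun G.Loc) (s₀ : G.Config) : ℕ → Hist G.Loc
  | 0 => ⟨s₀, []⟩
  | n + 1 =>
    let h := G.histOf σ τ s₀ n
    if G.owner h.last.1 = Owner.final then h
    else
      let td := if G.owner h.last.1 = Owner.min then σ h else τ h
      ⟨h.start, h.steps ++ [(td.1, td.2, G.nextCfg h.last td)]⟩

open Classical in
/-- The cost of the play from `s₀` determined by the profile `(σ, τ)`: `+∞` if no final
location is ever reached, and otherwise the accumulated cost up to the first visit of a
final location, plus the final cost function of that location evaluated at the current
clock value. -/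
noncomputable def PTG.playCost (G : PTG) (σ τ : StratFun G.Loc) (s₀ : G.Config) : EReal :=
  if hx : ∃ n, G.owner ((G.histOf σ τ s₀ n).last.1) = Owner.final then
    (((G.accCost (G.histOf σ τ s₀ (Nat.find hx)) +
        G.fcost ((G.histOf σ τ s₀ (Nat.find hx)).last.1)
          ((G.histOf σ τ s₀ (Nat.find hx)).last.2)) : ℝ) : EReal)
  else ⊤

/-- `Val^σ(s)`, the value of a Min strategy `σ`. -/
noncomputable def PTG.minValue (G : PTG) (σ : StratFun G.Loc) (s : G.Config) : EReal :=
  ⨆ τ : {τ : StratFun G.Loc // G.MaxValid τ}, G.playCost σ τ.1 s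

/-- `Val^τ(s)`, the value of a Max strategy `τ`. -/
noncomputable def PTG.maxValue (G : PTG) (τ : StratFun G.Loc) (s : G.Config) : EReal :=
  ⨅ σ : {σ : StratFun G.Loc // G.MinValid σ}, G.playCost σ.1 τ s

/-- The upper value of the game. -/
noncomputable def PTG.uval (G : PTG) (s : G.Config) : EReal :=
  ⨅ σ : {σ : StratFun G.Loc // G.MinValid σ}, G.minValue σ.1 s

/-- The lower value of the game. -/
noncomputable def PTG.lval (G : PTG) (s : G.Config) : EReal :=
  ⨆ τ : {τ : StratFun G.Loc // G.MaxValid τ}, G.maxValue τ.1 s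

/-- The value of the game (games are determined, so this coincides with the upper value). -/
noncomputable def PTG.val (G : PTG) (s : G.Config) : EReal := G.lval s

/-- The fake value of a Min strategy `σ` at configuration `s`: the supremum of the costs of
the plays consistent with `σ` from `s` that do reach a final location. -/
noncomputable def PTG.fakeVal (G : PTG) (σ : StratFun G.Loc) (s : G.Config) : EReal :=
  sSup {x : EReal | ∃ h : Hist G.Loc, h.start = s ∧ G.HistValid h ∧
    G.Consistent Owner.min σ h ∧ G.owner h.last.1 = Owner.final ∧
    x = (((G.accCost h + G.fcost h.last.1 h.last.2) : ℝ) : EReal)}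

/-- Well-formedness of a PTG: transitions leave non-final locations only, guards are
contained in `[0, M]`, urgent locations are non-final, final cost functions are affine with
rational coefficients, and the game is deadlock-free. -/
def PTG.WF (G : PTG) : Prop :=
  (∀ δ ∈ G.trans, G.owner δ.src ≠ Owner.final) ∧
  (∀ δ ∈ G.trans, 0 ≤ δ.lo ∧ δ.hi ≤ (G.M : ℝ)) ∧
  (∀ ℓ, G.urgent ℓ = true → G.owner ℓ ≠ Owner.final) ∧
  (∀ ℓ, G.owner ℓ = Owner.final → ∃ a b : ℚ, ∀ ν : ℝ, G.fcost ℓ ν = (a : ℝ) * ν + (b : ℝ)) ∧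
  (∀ (ℓ : G.Loc) (ν : ℝ), G.owner ℓ ≠ Owner.final → 0 ≤ ν → ν ≤ (G.M : ℝ) →
    ∃ s' t δ c, G.Move (ℓ, ν) s' t δ c)

/-- All guards have natural-number endpoints. -/
def PTG.NatEndpoints (G : PTG) : Prop :=
  ∀ δ ∈ G.trans, (∃ n : ℕ, δ.lo = (n : ℝ)) ∧ ∃ n : ℕ, δ.hi = (n : ℝ)

/-- `P_T`: the largest absolute value of a transition price. -/
def PTG.PT (G : PTG) : ℕ := G.trans.sup fun δ => δ.price.natAbs

/-- `P_L`: the largest absolute value of a location price-rate. -/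
def PTG.PL (G : PTG) : ℕ := Finset.univ.sup fun ℓ : G.Loc => (G.price ℓ).natAbs

/-- `P_f`: the largest absolute value taken by a final cost function on `[0, r]`. -/
noncomputable def PTG.Pf (G : PTG) (r : ℝ) : ℝ :=
  sSup {x : ℝ | ∃ (ℓ : G.Loc) (ν : ℝ), G.owner ℓ = Owner.final ∧ 0 ≤ ν ∧ ν ≤ r ∧
    x = |G.fcost ℓ ν|}

/-- The number of locations `|L|`. -/
def PTG.nLoc (G : PTG) : ℕ := Fintype.card G.Loc

/-- The number of final locations `|L_f|`. -/
def PTG.nFin (G : PTG) : ℕ :=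
  (Finset.univ.filter fun ℓ : G.Loc => G.owner ℓ = Owner.final).card

/-- A measure of the size of `G` (locations, transitions, and binary encodings of
the numerical constants). -/
def PTG.size (G : PTG) : ℕ :=
  G.nLoc + G.trans.card + Nat.log2 (G.M + 2) + Nat.log2 (G.PT + 2) + Nat.log2 (G.PL + 2) + 2

/-- `G` is an `r`-SPTG: every transition has guard `[0, r]` and performs no reset. -/
def PTG.IsSPTG (G : PTG) (r : ℝ) : Prop :=
  0 ≤ r ∧ r ≤ 1 ∧ ∀ δ ∈ G.trans,
    δ.lo = 0 ∧ δ.hi = r ∧ δ.loOpen = false ∧ δ.hiOpen = false ∧ δ.reset = false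

/-- The left end of the `i`-th interval determined by the points `pt` (with the convention
`ν₀ = min 0 (pt 0)`). -/
def prevPt {k : ℕ} (pt : Fin (k + 1) → ℝ) (i : Fin (k + 1)) : ℝ :=
  if (i : ℕ) = 0 then min 0 (pt 0) else
    pt ⟨(i : ℕ) - 1, lt_of_le_of_lt (Nat.sub_le _ _) i.isLt⟩

/-- A finite positional (FP) strategy of the player owning locations of kind `P` in an
`r`-SPTG: a memoryless strategy which, on each location of that player, is described by
finitely many rational threshold points `0 ≤ ν₁ < ⋯ < ν_k = r` and transitions
`δ₁, …, δ_k`, and on each induced interval either always plays immediately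
or always waits until the right endpoint of the interval. -/
structure FPStrat (G : PTG) (r : ℝ) (P : Owner) where
  strat : StratFun G.Loc
  valid : G.StratValid P strat
  memoryless : ∀ h h' : Hist G.Loc, G.HistValid h → G.HistValid h' →
    h.last = h'.last → strat h = strat h'
  points : Finset ℝ
  points_rat : ∀ p ∈ points, ∃ q : ℚ, p = (q : ℝ)
  points_mem : ∀ p ∈ points, 0 ≤ p ∧ p ≤ r
  r_mem : r ∈ points
  piecewise : ∀ ℓ : G.Loc, G.owner ℓ = P →
    ∃ (k : ℕ) (pt : Fin (k + 1) → ℝ) (δ : Fin (k + 1) → PTrans G.Loc),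
      StrictMono pt ∧ 0 ≤ pt 0 ∧ pt (Fin.last k) = r ∧ (∀ i, pt i ∈ points) ∧
      (∀ i : Fin (k + 1),
        (∀ ν : ℝ, prevPt pt i < ν → ν ≤ pt i → strat ⟨(ℓ, ν), []⟩ = (0, δ i)) ∨
        (∀ ν : ℝ, prevPt pt i < ν → ν ≤ pt i → strat ⟨(ℓ, ν), []⟩ = (pt i - ν, δ i))) ∧
      (0 < pt 0 → strat ⟨(ℓ, 0), []⟩ = (pt 0, δ 0))

/-- The size `|σ|` of an FP strategy: the number of intervals generated by its points. -/
def FPStrat.size {G : PTG} {r : ℝ} {P : Owner} (σ : FPStrat G r P) : ℕ := σ.points.card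

/-- Two clock values lie in the same interval of the partition induced by `pts`
(intervals being half-open to the left). -/
def SameInterval (pts : Finset ℝ) (ν ν' : ℝ) : Prop := ∀ p ∈ pts, (ν ≤ p ↔ ν' ≤ p)

/-- A negative cycle (NC) strategy of Min: an FP strategy such that along every consistent
finite play which starts and ends in the same location, with both clock values in the same
interval of the strategy, the sum of the prices of the discrete transitions is at most −1. -/
def FPStrat.IsNC {G : PTG} {r : ℝ} (σ : FPStrat G r Owner.min) : Prop :=
  ∀ h : Hist G.Loc, G.HistValid h → G.Consistent Owner.min σ.strat h →
    h.steps ≠ [] → h.last.1 = h.start.1 → SameInterval σ.points h.start.2 h.last.2 →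
    h.discSum ≤ -1

/-- A fake-optimal Min strategy: its fake value equals the value of the game everywhere. -/
def FPStrat.FakeOpt {G : PTG} {r : ℝ} (σ : FPStrat G r Owner.min) : Prop :=
  ∀ (ℓ : G.Loc) (ν : ℝ), 0 ≤ ν → ν ≤ r → G.fakeVal σ.strat (ℓ, ν) = G.val (ℓ, ν)

/-- An optimal Max FP strategy: its value equals the value of the game everywhere. -/
def FPStrat.Opt {G : PTG} {r : ℝ} (τ : FPStrat G r Owner.max) : Prop :=
  ∀ (ℓ : G.Loc) (ν : ℝ), 0 ≤ ν → ν ≤ r → G.maxValue τ.strat (ℓ, ν) = G.val (ℓ, ν)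

/-- A cost function on `[0, r]`: either infinite, or continuous piecewise affine with
finitely many cutpoints, all cutpoints and the values at them being rational. -/
def IsCostFunctionOn (r : ℝ) (f : ℝ → EReal) : Prop :=
  (∀ ν : ℝ, 0 ≤ ν → ν ≤ r → f ν = ⊤) ∨
  (∀ ν : ℝ, 0 ≤ ν → ν ≤ r → f ν = ⊥) ∨
  ∃ (n : ℕ) (a : Fin (n + 1) → ℚ),
    Monotone a ∧ ((a 0 : ℝ) = 0) ∧ ((a (Fin.last n) : ℝ) = r) ∧
    (∀ i, ∃ q : ℚ, f ((a i : ℚ) : ℝ) = ((q : ℝ) : EReal)) ∧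
    ∀ i : Fin n, ∃ α β : ℝ, ∀ ν : ℝ, ((a i.castSucc : ℚ) : ℝ) ≤ ν → ν ≤ ((a i.succ : ℚ) : ℝ) →
      f ν = ((α * ν + β : ℝ) : EReal)

/-- An `r`-SPTG is finitely optimal if Min has a fake-optimal NC strategy, Max has an optimal
FP strategy, and the value function of every location is a cost function. -/
def PTG.FinitelyOptimal (G : PTG) (r : ℝ) : Prop :=
  (∃ σ : FPStrat G r Owner.min, σ.IsNC ∧ σ.FakeOpt) ∧
  (∃ τ : FPStrat G r Owner.max, τ.Opt) ∧
  ∀ ℓ : G.Loc, IsCostFunctionOn r fun ν => G.val (ℓ, ν)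

/-- The finite set `F_G` of affine functions `k + φ_ℓ`, for `ℓ` final and
`k ∈ [−(|L|−1)·P_T, |L|·P_T] ∩ ℤ`. -/
def PTG.FF (G : PTG) : Set (ℝ → ℝ) :=
  {f | ∃ (ℓ : G.Loc) (k : ℤ), G.owner ℓ = Owner.final ∧
    -(((G.nLoc : ℤ) - 1) * (G.PT : ℤ)) ≤ k ∧ k ≤ (G.nLoc : ℤ) * (G.PT : ℤ) ∧
    f = fun ν => (k : ℝ) + G.fcost ℓ ν}

noncomputable def PTG.FFcard (G : PTG) : ℕ := G.FF.ncard

/-- The set of possible cutpoints: intersection points of two distinct functions of `F_G`. -/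
def PTG.posscp (G : PTG) (r : ℝ) : Set ℝ :=
  {ν | 0 ≤ ν ∧ ν ≤ r ∧ ∃ f₁ ∈ G.FF, ∃ f₂ ∈ G.FF, f₁ ≠ f₂ ∧ f₁ ν = f₂ ν}

/-- The construction `Wait(G, r, x)`: all guards are restricted to `[0, r]` and, for every
non-urgent location `ℓ`, a clone final location `ℓ^f` is added, with final cost function
`ν ↦ (r − ν)·π(ℓ) + x_ℓ`, together with a price-0 transition `(ℓ, ℓ^f)`.
(Clone locations are created for all locations; those of urgent or final locations are
unreachable since no transition leads to them.) -/
noncomputable def PTG.wait (G : PTG) (r : ℝ) (x : G.Loc → ℝ) : PTG where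
  Loc := G.Loc ⊕ G.Loc
  locFin := inferInstance
  locDec := inferInstance
  owner := Sum.elim G.owner fun _ => Owner.final
  urgent := Sum.elim G.urgent fun _ => false
  M := G.M
  trans :=
    (G.trans.image fun δ =>
      { src := Sum.inl δ.src, lo := max δ.lo 0, hi := min δ.hi r,
        loOpen := δ.loOpen, hiOpen := δ.hiOpen, reset := δ.reset,
        price := δ.price, tgt := Sum.inl δ.tgt }) ∪
    ((Finset.univ.filter fun ℓ : G.Loc =>
        G.owner ℓ ≠ Owner.final ∧ G.urgent ℓ = false).image
      fun ℓ => { src := Sum.inl ℓ, lo := 0, hi := r, loOpen := false, hiOpen := false,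
                 reset := false, price := 0, tgt := Sum.inr ℓ })
  price := Sum.elim G.price fun _ => 0
  fcost := Sum.elim G.fcost fun ℓ ν => (r - ν) * (G.price ℓ : ℝ) + x ℓ

/-- `G_r = Wait(G, r, (Val_G(ℓ, r))_ℓ)`. -/
noncomputable def PTG.Gr (G : PTG) (r : ℝ) : PTG :=
  G.wait r fun ℓ => (G.val (ℓ, r)).toReal

/-- Making the locations indicated by `S` urgent. -/
def PTG.makeUrgent (G : PTG) (S : G.Loc → Bool) : PTG :=
  { G with urgent := fun ℓ => G.urgent ℓ || S ℓ }

/-- `G_{L', r}`: the game `G_r` in which all locations of `L'` are made urgent. -/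
noncomputable def PTG.GLr (G : PTG) (S : G.Loc → Bool) (r : ℝ) : PTG :=
  (G.Gr r).makeUrgent (Sum.elim S fun _ => false)

/-- The operator `Next_{L'}(r)`: the supremum of the `r' ≤ r` such that the value functions
of `G_{L',r}` and of `G` coincide on `[r', r]`. -/
noncomputable def PTG.Next (G : PTG) (S : G.Loc → Bool) (r : ℝ) : ℝ :=
  sSup {r' : ℝ | 0 ≤ r' ∧ r' ≤ r ∧ ∀ (ℓ : G.Loc) (ν : ℝ), r' ≤ ν → ν ≤ r →
    (G.GLr S r).val (Sum.inl ℓ, ν) = G.val (ℓ, ν)}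

/-- Turning additionally location `ℓ` urgent: `L' ∪ {ℓ}` as a Boolean predicate. -/
def addLoc (G : PTG) (S : G.Loc → Bool) (ℓ : G.Loc) : G.Loc → Bool :=
  fun ℓ' => S ℓ' || decide (ℓ' = ℓ)

/-- The singleton `{ℓ}` as a Boolean predicate. -/
def singLoc (G : PTG) (ℓ : G.Loc) : G.Loc → Bool := fun ℓ' => decide (ℓ' = ℓ)

/-- `f` is, on `[0, r]`, piecewise affine with at most `N` cutpoints. -/
def PWAffineOn (r : ℝ) (f : ℝ → EReal) (N : ℕ) : Prop :=
  ∃ n : ℕ, n ≤ N ∧ ∃ a : Fin (n + 2) → ℝ,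
    Monotone a ∧ a 0 = 0 ∧ a (Fin.last (n + 1)) = r ∧
    ∀ i : Fin (n + 1), ∃ α β : ℝ, ∀ ν : ℝ, a i.castSucc ≤ ν → ν ≤ a i.succ →
      f ν = ((α * ν + β : ℝ) : EReal)

/-- `f` has a cutpoint in `[a, b)`: some point of `[a, b)` has no neighbourhood
(within `[0,1]`) on which `f` is affine. -/
def HasCutpointIn (f : ℝ → EReal) (a b : ℝ) : Prop :=
  ∃ x : ℝ, a ≤ x ∧ x < b ∧ ∀ ε : ℝ, 0 < ε →
    ¬ ∃ α β : ℝ, ∀ ν : ℝ, max 0 (x - ε) ≤ ν → ν ≤ min 1 (x + ε) →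
      f ν = ((α * ν + β : ℝ) : EReal)

/-- The endpoints of the guards of `G`, together with `0`. -/
noncomputable def PTG.endpoints (G : PTG) : Finset ℝ :=
  insert 0 ((G.trans.image PTrans.lo) ∪ (G.trans.image PTrans.hi))

/-- `s` is a region of `G`: a singleton of an endpoint, or an open interval between two
consecutive endpoints. -/
def PTG.IsRegion (G : PTG) (s : Set ℝ) : Prop :=
  (∃ e ∈ G.endpoints, s = {e}) ∨
  ∃ e ∈ G.endpoints, ∃ e' ∈ G.endpoints, e < e' ∧
    (∀ p ∈ G.endpoints, p ≤ e ∨ e' ≤ p) ∧ s = Set.Ioo e e'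

/-- No cycle of the configuration graph of `G` traverses a resetting transition. -/
def PTG.ResetAcyclic (G : PTG) : Prop :=
  ¬ ∃ h : Hist G.Loc, G.HistValid h ∧ h.steps ≠ [] ∧ h.last = h.start ∧
      ∃ st ∈ h.steps, st.2.1.reset = true

/-- An `ε`-optimal strategy of Min. -/
def PTG.MinEpsOpt (G : PTG) (σ : StratFun G.Loc) (ε : ℝ) : Prop :=
  G.MinValid σ ∧ ∀ (ℓ : G.Loc) (ν : ℝ), 0 ≤ ν → ν ≤ (G.M : ℝ) →
    G.minValue σ (ℓ, ν) ≤ G.val (ℓ, ν) + (ε : EReal)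

/-- An `ε`-optimal strategy of Max. -/
def PTG.MaxEpsOpt (G : PTG) (τ : StratFun G.Loc) (ε : ℝ) : Prop :=
  G.MaxValid τ ∧ ∀ (ℓ : G.Loc) (ν : ℝ), 0 ≤ ν → ν ≤ (G.M : ℝ) →
    G.val (ℓ, ν) - (ε : EReal) ≤ G.maxValue τ (ℓ, ν)

end PTGPaper
namespace PTGPaper

/-! ### Auxiliary material for Statement 9 -/

section SlopeAux

variable {L : Type}

/-- Add `d` to the delay of the first step of a list of steps. -/
def adjFirst (d : ℝ) : List (ℝ × PTrans L × (L × ℝ)) → List (ℝ × PTrans L × (L × ℝ))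
  | [] => []
  | (t, δ, s) :: rest => (t + d, δ, s) :: rest

lemma adjFirst_adjFirst (d e : ℝ) (l : List (ℝ × PTrans L × (L × ℝ))) :
    adjFirst e (adjFirst d l) = adjFirst (d + e) l := by
  cases l with
  | nil => rfl
  | cons x rest => obtain ⟨t, δ, s⟩ := x; simp [adjFirst]; ring

lemma adjFirst_zero (l : List (ℝ × PTrans L × (L × ℝ))) : adjFirst 0 l = l := by
  cases l with
  | nil => rfl
  | cons x rest => obtain ⟨t, δ, s⟩ := x; simp [adjFirst]

lemma adjFirst_ne_nil (d : ℝ) (l : List (ℝ × PTrans L × (L × ℝ))) (h : l ≠ []) :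
    adjFirst d l ≠ [] := by
  cases l with
  | nil => exact absurd rfl h
  | cons x rest => obtain ⟨t, δ, s⟩ := x; simp [adjFirst]

lemma adjFirst_append (d : ℝ) (l u : List (ℝ × PTrans L × (L × ℝ))) (h : l ≠ []) :
    adjFirst d (l ++ u) = adjFirst d l ++ u := by
  cases l with
  | nil => exact absurd rfl h
  | cons x rest => obtain ⟨t, δ, s⟩ := x; simp [adjFirst]

lemma lastFrom_adjFirst (d : ℝ) (x : ℝ × PTrans L × (L × ℝ))
    (rest : List (ℝ × PTrans L × (L × ℝ))) (s s' : L × ℝ) :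
    Hist.lastFrom s (adjFirst d (x :: rest)) = Hist.lastFrom s' (x :: rest) := by
  obtain ⟨t, δ, c⟩ := x; simp [adjFirst, Hist.lastFrom]

-- The move with delay shifted by `d` if the history is empty, unchanged otherwise.
open Classical in
noncomputable def shiftMove (d : ℝ) (h : Hist L) (m : ℝ × PTrans L) : ℝ × PTrans L :=
  if h.steps = [] then (m.1 + d, m.2) else m

end SlopeAux

section SlopeShift

variable (G : PTG) (ℓ₀ : G.Loc) (ν ν' : ℝ)

/-- Shift a history starting at `(ℓ₀, ν')` into one starting at `(ℓ₀, ν)` by incorporating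
the extra waiting time `ν' - ν` into the first delay. -/
def shHist (h : Hist G.Loc) : Hist G.Loc := ⟨(ℓ₀, ν), adjFirst (ν' - ν) h.steps⟩

open Classical in
noncomputable def unshHist (h : Hist G.Loc) : Hist G.Loc :=
  if h.start = (ℓ₀, ν) then ⟨(ℓ₀, ν'), adjFirst (ν - ν') h.steps⟩ else h

open Classical in
noncomputable def shiftHist (h : Hist G.Loc) : Hist G.Loc :=
  if h.start = (ℓ₀, ν') then shHist G ℓ₀ ν ν' h else h

lemma shHist_last_fst (h : Hist G.Loc) (hs : h.start = (ℓ₀, ν')) :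
    (shHist G ℓ₀ ν ν' h).last.1 = h.last.1 := by
  simp only [shHist, Hist.last]
  cases hl : h.steps with
  | nil => simp [hl, adjFirst, hs, Hist.lastFrom]
  | cons x rest => rw [lastFrom_adjFirst (ν' - ν) x rest (ℓ₀, ν) h.start]

lemma shHist_last (h : Hist G.Loc) (hne : h.steps ≠ []) :
    (shHist G ℓ₀ ν ν' h).last = h.last := by
  simp only [shHist, Hist.last]
  cases hl : h.steps with
  | nil => exact absurd hl hne
  | cons x rest => rw [lastFrom_adjFirst (ν' - ν) x rest (ℓ₀, ν) h.start]

lemma unshHist_last (h : Hist G.Loc) (hne : h.steps ≠ []) (hs : h.start = (ℓ₀, ν)) :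
    (unshHist G ℓ₀ ν ν' h).last = h.last := by
  rw [unshHist, if_pos hs]
  simp only [Hist.last]
  cases hl : h.steps with
  | nil => exact absurd hl hne
  | cons x rest => rw [lastFrom_adjFirst (ν - ν') x rest (ℓ₀, ν') h.start]

lemma move_shift (hreset : ∀ δ ∈ G.trans, δ.reset = false) (hu : G.urgent ℓ₀ = false)
    (hle : ν ≤ ν') {s : G.Config} {t : ℝ} {δ : PTrans G.Loc} {c : ℝ}
    (hm : G.Move (ℓ₀, ν') s t δ c) :
    G.Move (ℓ₀, ν) s (t + (ν' - ν)) δ (c + (ν' - ν) * (G.price ℓ₀ : ℝ)) := by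
  obtain ⟨h1, h2, h3, _h4, h5, h6, h7, h8⟩ := hm
  have hres : δ.reset = false := hreset δ h1
  refine ⟨h1, h2, ?_, ?_, ?_, h6, ?_, ?_⟩
  · linarith
  · intro habs; exact absurd habs (by simp [hu])
  · have : (ℓ₀, ν).2 + (t + (ν' - ν)) = (ℓ₀, ν').2 + t := by simp; ring
    rw [this]; exact h5
  · simp only [hres, if_false] at h7 ⊢
    rw [h7]; simp; ring
  · rw [h8]; simp; ring

end SlopeShift

section SlopeValid

variable (G : PTG) (ℓ₀ : G.Loc) (ν ν' : ℝ)

lemma shHist_valid (hreset : ∀ δ ∈ G.trans, δ.reset = false) (hu : G.urgent ℓ₀ = false)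
    (h0 : 0 ≤ ν) (hle : ν ≤ ν') (hM : ν' ≤ (G.M : ℝ))
    (h : Hist G.Loc) (hv : G.HistValid h) (hs : h.start = (ℓ₀, ν')) :
    G.HistValid (shHist G ℓ₀ ν ν' h) := by
  obtain ⟨_, _, hv2⟩ := hv
  refine ⟨h0, le_trans hle hM, ?_⟩
  show G.ValidFrom (ℓ₀, ν) (adjFirst (ν' - ν) h.steps)
  rw [hs] at hv2
  cases hl : h.steps with
  | nil => trivial
  | cons x rest =>
      obtain ⟨t, δ, s⟩ := x
      rw [hl] at hv2
      obtain ⟨⟨c, mv⟩, hrest⟩ := hv2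
      exact ⟨⟨_, move_shift G ℓ₀ ν ν' hreset hu hle mv⟩, hrest⟩

lemma validFrom_clock (hwf : G.WF) :
    ∀ (l : List (ℝ × PTrans G.Loc × G.Config)) (s : G.Config), 0 ≤ s.2 → s.2 ≤ (G.M : ℝ) →
      G.ValidFrom s l → 0 ≤ (Hist.lastFrom s l).2 ∧ (Hist.lastFrom s l).2 ≤ (G.M : ℝ) := by
  intro l
  induction l with
  | nil => intro s hs0 hs1 _; exact ⟨hs0, hs1⟩
  | cons x rest ih =>
      obtain ⟨t, δ, s'⟩ := x
      intro s hs0 hs1 hv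
      obtain ⟨⟨c, mv⟩, hrest⟩ := hv
      obtain ⟨hδ, _, ht, _, hg, _, hs', _⟩ := mv
      have hb : 0 ≤ s'.2 ∧ s'.2 ≤ (G.M : ℝ) := by
        rw [hs']
        by_cases hres : δ.reset
        · simp [hres]
        · rw [if_neg hres]
          constructor
          · linarith
          · have hhi : δ.hi ≤ (G.M : ℝ) := (hwf.2.1 δ hδ).2
            rcases hg with ⟨_, hg2⟩
            by_cases hop : δ.hiOpen
            · simp [hop] at hg2; linarith
            · simp [hop] at hg2; linarith
      exact ih s' hb.1 hb.2 hrest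

lemma histValid_clock (hwf : G.WF) (h : Hist G.Loc) (hv : G.HistValid h) :
    0 ≤ h.last.2 ∧ h.last.2 ≤ (G.M : ℝ) :=
  validFrom_clock G hwf h.steps h.start hv.1 hv.2.1 hv.2.2

lemma defaultMove_ex (hwf : G.WF) (ℓ : G.Loc) (x : ℝ)
    (hc : G.owner ℓ ≠ Owner.final ∧ 0 ≤ x ∧ x ≤ (G.M : ℝ)) :
    ∃ p : ℝ × PTrans G.Loc, ∃ s' c, G.Move (ℓ, x) s' p.1 p.2 c := by
  obtain ⟨s', t, δ, c, hm⟩ := hwf.2.2.2.2 ℓ x hc.1 hc.2.1 hc.2.2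
  exact ⟨(t, δ), s', c, hm⟩

open Classical in
noncomputable def defaultMove (hwf : G.WF) (ℓ : G.Loc) (x : ℝ) : ℝ × PTrans G.Loc :=
  if hc : G.owner ℓ ≠ Owner.final ∧ 0 ≤ x ∧ x ≤ (G.M : ℝ) then
    (defaultMove_ex G hwf ℓ x hc).choose
  else (0, ⟨ℓ, 0, 0, false, false, false, 0, ℓ⟩)

lemma defaultMove_spec (hwf : G.WF) (ℓ : G.Loc) (x : ℝ)
    (h1 : G.owner ℓ ≠ Owner.final) (h2 : 0 ≤ x) (h3 : x ≤ (G.M : ℝ)) :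
    ∃ s' c, G.Move (ℓ, x) s' (defaultMove G hwf ℓ x).1 (defaultMove G hwf ℓ x).2 c := by
  rw [defaultMove, dif_pos ⟨h1, h2, h3⟩]
  exact (defaultMove_ex G hwf ℓ x ⟨h1, h2, h3⟩).choose_spec

lemma validFrom_append :
    ∀ (l : List (ℝ × PTrans G.Loc × G.Config)) (s s₂ : G.Config) (t : ℝ) (δ : PTrans G.Loc),
      G.ValidFrom s l → (∃ c, G.Move (Hist.lastFrom s l) s₂ t δ c) →
      G.ValidFrom s (l ++ [(t, δ, s₂)]) := by
  intro l
  induction l with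
  | nil => intro s s₂ t δ _ hm; exact ⟨hm, trivial⟩
  | cons x rest ih =>
      obtain ⟨t', δ', s'⟩ := x
      intro s s₂ t δ hv hm
      obtain ⟨hmv, hrest⟩ := hv
      exact ⟨hmv, ih s' s₂ t δ hrest hm⟩

lemma histValid_append (h : Hist G.Loc) (hv : G.HistValid h) (td : ℝ × PTrans G.Loc)
    (hmv : ∃ s' c, G.Move h.last s' td.1 td.2 c) :
    G.HistValid ⟨h.start, h.steps ++ [(td.1, td.2, G.nextCfg h.last td)]⟩ := by
  obtain ⟨s', c, mv⟩ := hmv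
  have hs' : s' = G.nextCfg h.last td := by
    have h1 := mv.2.2.2.2.2.1
    have h2 := mv.2.2.2.2.2.2.1
    exact Prod.ext h1 h2
  rw [hs'] at mv
  exact ⟨hv.1, hv.2.1, validFrom_append G h.steps h.start _ td.1 td.2 hv.2.2 ⟨c, mv⟩⟩

lemma histOf_succ (σ τ : StratFun G.Loc) (s₀ : G.Config) (n : ℕ) :
    G.histOf σ τ s₀ (n + 1) =
      if G.owner (G.histOf σ τ s₀ n).last.1 = Owner.final then G.histOf σ τ s₀ n
      else
        let h := G.histOf σ τ s₀ n
        let td := if G.owner h.last.1 = Owner.min then σ h else τ h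
        ⟨h.start, h.steps ++ [(td.1, td.2, G.nextCfg h.last td)]⟩ := rfl

lemma histOf_start (σ τ : StratFun G.Loc) (s₀ : G.Config) :
    ∀ n, (G.histOf σ τ s₀ n).start = s₀ := by
  intro n
  induction n with
  | zero => rfl
  | succ n ih =>
      show (PTG.histOf G σ τ s₀ (n+1)).start = s₀
      rw [PTG.histOf]
      split
      · exact ih
      · exact ih

lemma histOf_steps_nil (σ τ : StratFun G.Loc) (s₀ : G.Config) :
    ∀ n, (G.histOf σ τ s₀ n).steps = [] → (G.histOf σ τ s₀ n).last = s₀ := by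
  intro n
  induction n with
  | zero => intro _; rfl
  | succ n ih =>
      intro hnil
      by_cases hf : G.owner (G.histOf σ τ s₀ n).last.1 = Owner.final
      · rw [histOf_succ, if_pos hf] at hnil ⊢
        exact ih hnil
      · rw [histOf_succ, if_neg hf] at hnil
        simp at hnil

end SlopeValid

section SlopeStrat

variable (G : PTG) (ℓ₀ : G.Loc) (ν ν' : ℝ)

open Classical in
/-- Shift a strategy at `(ℓ₀, ν')` to a strategy at `(ℓ₀, ν)`: on the empty history it waits
an extra `ν' - ν`, afterwards it mimics the original strategy. -/
noncomputable def shiftStrat (hwf : G.WF) (ρ : StratFun G.Loc) : StratFun G.Loc := fun h =>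
  if h.start = (ℓ₀, ν) ∧ h.steps = [] then
    ((ρ ⟨(ℓ₀, ν'), []⟩).1 + (ν' - ν), (ρ ⟨(ℓ₀, ν'), []⟩).2)
  else if h.start = (ℓ₀, ν) ∧ G.HistValid (unshHist G ℓ₀ ν ν' h) then
    ρ (unshHist G ℓ₀ ν ν' h)
  else defaultMove G hwf h.last.1 h.last.2

/-- The composition of a strategy at `(ℓ₀, ν)` with the history shift. -/
noncomputable def compStrat (ρ : StratFun G.Loc) : StratFun G.Loc := fun h' =>
  ρ (shiftHist G ℓ₀ ν ν' h')

lemma shiftStrat_valid (hwf : G.WF) (P : Owner) (hPf : P ≠ Owner.final)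
    (ρ : StratFun G.Loc) (hρ : G.StratValid P ρ)
    (hreset : ∀ δ ∈ G.trans, δ.reset = false) (hu : G.urgent ℓ₀ = false)
    (h0 : 0 ≤ ν) (hle : ν ≤ ν') (hM : ν' ≤ (G.M : ℝ)) :
    G.StratValid P (shiftStrat G ℓ₀ ν ν' hwf ρ) := by
  intro h hv hP
  rw [shiftStrat]
  split_ifs with h1 h2
  · obtain ⟨hs, he⟩ := h1
    have hlast : h.last = (ℓ₀, ν) := by
      rw [Hist.last, he, hs]
      rfl
    rw [hlast] at hP ⊢
    have hv' : G.HistValid ⟨(ℓ₀, ν'), []⟩ := ⟨le_trans h0 hle, hM, trivial⟩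
    obtain ⟨s', c, mv⟩ := hρ ⟨(ℓ₀, ν'), []⟩ hv' hP
    exact ⟨s', _, move_shift G ℓ₀ ν ν' hreset hu hle mv⟩
  · obtain ⟨hs, hvu⟩ := h2
    have hne : h.steps ≠ [] := fun he => h1 ⟨hs, he⟩
    have hlast : (unshHist G ℓ₀ ν ν' h).last = h.last := unshHist_last G ℓ₀ ν ν' h hne hs
    obtain ⟨s', c, mv⟩ := hρ (unshHist G ℓ₀ ν ν' h) hvu (by rw [hlast]; exact hP)
    rw [hlast] at mv
    exact ⟨s', c, mv⟩
  · have hcl := histValid_clock G hwf h hv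
    have hf : G.owner h.last.1 ≠ Owner.final := by rw [hP]; exact hPf
    exact defaultMove_spec G hwf h.last.1 h.last.2 hf hcl.1 hcl.2

lemma compStrat_valid (P : Owner) (hP0 : G.owner ℓ₀ ≠ P)
    (ρ : StratFun G.Loc) (hρ : G.StratValid P ρ)
    (hreset : ∀ δ ∈ G.trans, δ.reset = false) (hu : G.urgent ℓ₀ = false)
    (h0 : 0 ≤ ν) (hle : ν ≤ ν') (hM : ν' ≤ (G.M : ℝ)) :
    G.StratValid P (compStrat G ℓ₀ ν ν' ρ) := by
  intro h' hv hP
  rw [compStrat, shiftHist]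
  split_ifs with hs
  · cases hl : h'.steps with
    | nil =>
        have hlast : h'.last = (ℓ₀, ν') := by rw [Hist.last, hl, hs]; rfl
        rw [hlast] at hP
        exact absurd hP hP0
    | cons x rest =>
        have hne : h'.steps ≠ [] := by rw [hl]; simp
        have hv2 : G.HistValid (shHist G ℓ₀ ν ν' h') :=
          shHist_valid G ℓ₀ ν ν' hreset hu h0 hle hM h' hv hs
        have hl2 : (shHist G ℓ₀ ν ν' h').last = h'.last := shHist_last G ℓ₀ ν ν' h' hne
        obtain ⟨s', c, mv⟩ := hρ (shHist G ℓ₀ ν ν' h') hv2 (by rw [hl2]; exact hP)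
        rw [hl2] at mv
        exact ⟨s', c, mv⟩
  · exact hρ h' hv hP

lemma shiftStrat_corr (hwf : G.WF) (hne : ν ≠ ν') (ρ : StratFun G.Loc) (h' : Hist G.Loc)
    (hv : G.HistValid h') (hs : h'.start = (ℓ₀, ν')) :
    shiftStrat G ℓ₀ ν ν' hwf ρ (shHist G ℓ₀ ν ν' h') = shiftMove (ν' - ν) h' (ρ h') := by
  rw [shiftStrat, shiftMove]
  cases hl : h'.steps with
  | nil =>
      have hh : h' = ⟨(ℓ₀, ν'), []⟩ := by
        obtain ⟨st, sp⟩ := h'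
        simp only at hs hl
        rw [hs, hl]
      rw [if_pos ⟨rfl, by rw [shHist, hl]; rfl⟩, if_pos rfl, hh]
  | cons x rest =>
      have hne1 : ¬((shHist G ℓ₀ ν ν' h').start = (ℓ₀, ν) ∧ (shHist G ℓ₀ ν ν' h').steps = []) := by
        rintro ⟨-, habs⟩
        rw [shHist] at habs
        exact adjFirst_ne_nil (ν' - ν) h'.steps (by rw [hl]; simp) habs
      have huns : unshHist G ℓ₀ ν ν' (shHist G ℓ₀ ν ν' h') = h' := by
        rw [unshHist, if_pos (show (shHist G ℓ₀ ν ν' h').start = (ℓ₀, ν) from rfl), shHist]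
        obtain ⟨st, sp⟩ := h'
        simp only at hs ⊢
        rw [hs, adjFirst_adjFirst]
        have : ν' - ν + (ν - ν') = 0 := by ring
        rw [this, adjFirst_zero]
      rw [if_neg hne1, if_pos ⟨rfl, by rw [huns]; exact hv⟩, huns, if_neg (by simp [hl])]

lemma compStrat_corr (ρ : StratFun G.Loc) (h' : Hist G.Loc)
    (hs : h'.start = (ℓ₀, ν')) (hne : h'.steps ≠ []) :
    ρ (shHist G ℓ₀ ν ν' h') = shiftMove (ν' - ν) h' (compStrat G ℓ₀ ν ν' ρ h') := by
  rw [compStrat, shiftHist, if_pos hs, shiftMove, if_neg hne]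

end SlopeStrat

section SlopeCorr

variable (G : PTG) (ℓ₀ : G.Loc) (ν ν' : ℝ)

lemma shHist_append (h' : Hist G.Loc) (hs : h'.start = (ℓ₀, ν')) (td : ℝ × PTrans G.Loc)
    (hres : td.2.reset = false) :
    shHist G ℓ₀ ν ν' ⟨h'.start, h'.steps ++ [(td.1, td.2, G.nextCfg h'.last td)]⟩ =
    ⟨(ℓ₀, ν), (shHist G ℓ₀ ν ν' h').steps ++
      [((shiftMove (ν' - ν) h' td).1, (shiftMove (ν' - ν) h' td).2,
        G.nextCfg (shHist G ℓ₀ ν ν' h').last (shiftMove (ν' - ν) h' td))]⟩ := by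
  cases hl : h'.steps with
  | nil =>
      have hlast : h'.last = (ℓ₀, ν') := by rw [Hist.last, hl, hs]; rfl
      rw [shiftMove, if_pos hl, hlast]
      simp only [shHist, hl, List.nil_append, adjFirst, Hist.last, Hist.lastFrom,
        PTG.nextCfg, hres, Bool.false_eq_true, if_false]
      congr 3
      ring
  | cons x rest =>
      have hne : h'.steps ≠ [] := by rw [hl]; simp
      rw [← hl]
      have hshlast : (shHist G ℓ₀ ν ν' h').last = h'.last := shHist_last G ℓ₀ ν ν' h' hne
      rw [shiftMove, if_neg hne, hshlast]
      show (⟨(ℓ₀, ν), adjFirst (ν' - ν)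
          (h'.steps ++ [(td.1, td.2, G.nextCfg h'.last td)])⟩ : Hist G.Loc) = _
      rw [adjFirst_append (ν' - ν) h'.steps _ hne]
      rfl

lemma hist_corr (hwf : G.WF) (hreset : ∀ δ ∈ G.trans, δ.reset = false)
    (hu : G.urgent ℓ₀ = false) (h0 : 0 ≤ ν) (hle : ν ≤ ν') (hM : ν' ≤ (G.M : ℝ))
    (σ τ σ' τ' : StratFun G.Loc) (hσ' : G.MinValid σ') (hτ' : G.MaxValid τ')
    (Hmin : ∀ h', G.HistValid h' → h'.start = (ℓ₀, ν') → G.owner h'.last.1 = Owner.min →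
      σ (shHist G ℓ₀ ν ν' h') = shiftMove (ν' - ν) h' (σ' h'))
    (Hmax : ∀ h', G.HistValid h' → h'.start = (ℓ₀, ν') → G.owner h'.last.1 = Owner.max →
      τ (shHist G ℓ₀ ν ν' h') = shiftMove (ν' - ν) h' (τ' h')) :
    ∀ n, G.HistValid (G.histOf σ' τ' (ℓ₀, ν') n) ∧
      G.histOf σ τ (ℓ₀, ν) n = shHist G ℓ₀ ν ν' (G.histOf σ' τ' (ℓ₀, ν') n) := by
  intro n
  induction n with
  | zero => exact ⟨⟨le_trans h0 hle, hM, trivial⟩, rfl⟩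
  | succ n ih =>
      obtain ⟨ihv, ihe⟩ := ih
      set h' := G.histOf σ' τ' (ℓ₀, ν') n with hh'
      have hstart : h'.start = (ℓ₀, ν') := histOf_start G σ' τ' _ n
      have hlast1 : (shHist G ℓ₀ ν ν' h').last.1 = h'.last.1 :=
        shHist_last_fst G ℓ₀ ν ν' h' hstart
      by_cases hf : G.owner h'.last.1 = Owner.final
      · have e1 : G.histOf σ' τ' (ℓ₀, ν') (n + 1) = h' := by
          rw [histOf_succ, ← hh', if_pos hf]
        have hfσ : G.owner (G.histOf σ τ (ℓ₀, ν) n).last.1 = Owner.final := by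
          rw [ihe, hlast1]; exact hf
        have e2 : G.histOf σ τ (ℓ₀, ν) (n + 1) = G.histOf σ τ (ℓ₀, ν) n := by
          rw [histOf_succ, if_pos hfσ]
        rw [e1, e2]
        exact ⟨ihv, ihe⟩
      · have hfσ : ¬ G.owner (G.histOf σ τ (ℓ₀, ν) n).last.1 = Owner.final := by
          rw [ihe, hlast1]; exact hf
        cases howner : G.owner h'.last.1 with
        | final => exact absurd howner hf
        | min =>
            have hmv : ∃ s' c, G.Move h'.last s' (σ' h').1 (σ' h').2 c := hσ' h' ihv howner
            have hres : (σ' h').2.reset = false := by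
              obtain ⟨s', c, mv⟩ := hmv; exact hreset _ mv.1
            have e1 : G.histOf σ' τ' (ℓ₀, ν') (n + 1) =
                ⟨h'.start, h'.steps ++
                  [((σ' h').1, (σ' h').2, G.nextCfg h'.last (σ' h'))]⟩ := by
              rw [histOf_succ, ← hh', if_neg hf]
              simp only [howner, if_true, reduceIte]
            have hσval : σ (shHist G ℓ₀ ν ν' h') = shiftMove (ν' - ν) h' (σ' h') :=
              Hmin h' ihv hstart howner
            have hownσ : G.owner (G.histOf σ τ (ℓ₀, ν) n).last.1 = Owner.min := by
              rw [ihe, hlast1]; exact howner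
            have e2 : G.histOf σ τ (ℓ₀, ν) (n + 1) =
                ⟨(shHist G ℓ₀ ν ν' h').start, (shHist G ℓ₀ ν ν' h').steps ++
                  [((shiftMove (ν' - ν) h' (σ' h')).1, (shiftMove (ν' - ν) h' (σ' h')).2,
                    G.nextCfg (shHist G ℓ₀ ν ν' h').last (shiftMove (ν' - ν) h' (σ' h')))]⟩ := by
              rw [histOf_succ, if_neg hfσ]
              simp only [ihe, hownσ, hlast1, howner, reduceIte, hσval]
            refine ⟨?_, ?_⟩
            · rw [e1]; exact histValid_append G h' ihv (σ' h') hmv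
            · rw [e2, e1, shHist_append G ℓ₀ ν ν' h' hstart (σ' h') hres]
              rfl
        | max =>
            have hmv : ∃ s' c, G.Move h'.last s' (τ' h').1 (τ' h').2 c := hτ' h' ihv howner
            have hres : (τ' h').2.reset = false := by
              obtain ⟨s', c, mv⟩ := hmv; exact hreset _ mv.1
            have e1 : G.histOf σ' τ' (ℓ₀, ν') (n + 1) =
                ⟨h'.start, h'.steps ++
                  [((τ' h').1, (τ' h').2, G.nextCfg h'.last (τ' h'))]⟩ := by
              rw [histOf_succ, ← hh', if_neg hf]
              simp only [howner, reduceIte, reduceCtorEq, Bool.false_eq_true, if_false]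
            have hτval : τ (shHist G ℓ₀ ν ν' h') = shiftMove (ν' - ν) h' (τ' h') :=
              Hmax h' ihv hstart howner
            have hownτ : G.owner (G.histOf σ τ (ℓ₀, ν) n).last.1 = Owner.max := by
              rw [ihe, hlast1]; exact howner
            have e2 : G.histOf σ τ (ℓ₀, ν) (n + 1) =
                ⟨(shHist G ℓ₀ ν ν' h').start, (shHist G ℓ₀ ν ν' h').steps ++
                  [((shiftMove (ν' - ν) h' (τ' h')).1, (shiftMove (ν' - ν) h' (τ' h')).2,
                    G.nextCfg (shHist G ℓ₀ ν ν' h').last (shiftMove (ν' - ν) h' (τ' h')))]⟩ := by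
              rw [histOf_succ, if_neg hfσ]
              simp only [ihe, hownτ, hlast1, howner, reduceIte, reduceCtorEq,
                Bool.false_eq_true, if_false, hτval]
            refine ⟨?_, ?_⟩
            · rw [e1]; exact histValid_append G h' ihv (τ' h') hmv
            · rw [e2, e1, shHist_append G ℓ₀ ν ν' h' hstart (τ' h') hres]
              rfl

end SlopeCorr

section SlopeCost

variable (G : PTG) (ℓ₀ : G.Loc) (ν ν' : ℝ)

lemma accCost_sh (h' : Hist G.Loc) (hne : h'.steps ≠ []) (hs : h'.start = (ℓ₀, ν')) :
    G.accCost (shHist G ℓ₀ ν ν' h') =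
      (ν' - ν) * (G.price ℓ₀ : ℝ) + G.accCost h' := by
  obtain ⟨st, steps⟩ := h'
  simp only at hs hne
  subst hs
  cases steps with
  | nil => exact absurd rfl hne
  | cons x rest =>
      obtain ⟨t, δ, s⟩ := x
      show Hist.costFrom G.price (ℓ₀, ν) (adjFirst (ν' - ν) ((t, δ, s) :: rest)) =
        (ν' - ν) * (G.price ℓ₀ : ℝ) + Hist.costFrom G.price (ℓ₀, ν') ((t, δ, s) :: rest)
      simp only [adjFirst, Hist.costFrom]
      ring

lemma ereal_cancel (c : ℝ) (x : EReal) :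
    (c : EReal) + (((-c : ℝ) : EReal) + x) = x := by
  rw [← add_assoc, ← EReal.coe_add]
  norm_num

lemma ereal_cancel' (c : ℝ) (x : EReal) :
    ((-c : ℝ) : EReal) + ((c : EReal) + x) = x := by
  rw [← add_assoc, ← EReal.coe_add]
  norm_num

lemma playCost_corr (hwf : G.WF) (hreset : ∀ δ ∈ G.trans, δ.reset = false)
    (hfin : G.owner ℓ₀ ≠ Owner.final)
    (hu : G.urgent ℓ₀ = false) (h0 : 0 ≤ ν) (hle : ν ≤ ν') (hM : ν' ≤ (G.M : ℝ))
    (σ τ σ' τ' : StratFun G.Loc) (hσ' : G.MinValid σ') (hτ' : G.MaxValid τ')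
    (Hmin : ∀ h', G.HistValid h' → h'.start = (ℓ₀, ν') → G.owner h'.last.1 = Owner.min →
      σ (shHist G ℓ₀ ν ν' h') = shiftMove (ν' - ν) h' (σ' h'))
    (Hmax : ∀ h', G.HistValid h' → h'.start = (ℓ₀, ν') → G.owner h'.last.1 = Owner.max →
      τ (shHist G ℓ₀ ν ν' h') = shiftMove (ν' - ν) h' (τ' h')) :
    G.playCost σ τ (ℓ₀, ν) =
      (((ν' - ν) * (G.price ℓ₀ : ℝ) : ℝ) : EReal) + G.playCost σ' τ' (ℓ₀, ν') := by
  have corr := hist_corr G ℓ₀ ν ν' hwf hreset hu h0 hle hM σ τ σ' τ' hσ' hτ' Hmin Hmax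
  have hl1 : ∀ n, (G.histOf σ τ (ℓ₀, ν) n).last.1 = (G.histOf σ' τ' (ℓ₀, ν') n).last.1 := by
    intro n
    rw [(corr n).2]
    exact shHist_last_fst G ℓ₀ ν ν' _ (histOf_start G σ' τ' _ n)
  rw [PTG.playCost, PTG.playCost]
  by_cases hx' : ∃ n, G.owner ((G.histOf σ' τ' (ℓ₀, ν') n).last.1) = Owner.final
  · have hx : ∃ n, G.owner ((G.histOf σ τ (ℓ₀, ν) n).last.1) = Owner.final := by
      obtain ⟨n, hn⟩ := hx'
      exact ⟨n, by rw [hl1 n]; exact hn⟩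
    rw [dif_pos hx, dif_pos hx']
    have hfind : Nat.find hx = Nat.find hx' := by
      apply le_antisymm
      · exact Nat.find_le (by rw [hl1]; exact Nat.find_spec hx')
      · exact Nat.find_le (by rw [← hl1]; exact Nat.find_spec hx)
    set n₀ := Nat.find hx' with hn₀
    have hfin' : G.owner ((G.histOf σ' τ' (ℓ₀, ν') n₀).last.1) = Owner.final :=
      Nat.find_spec hx'
    have hne : (G.histOf σ' τ' (ℓ₀, ν') n₀).steps ≠ [] := by
      intro hnil
      have := histOf_steps_nil G σ' τ' (ℓ₀, ν') n₀ hnil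
      rw [this] at hfin'
      exact hfin hfin'
    have heq := (corr n₀).2
    have hstart' : (G.histOf σ' τ' (ℓ₀, ν') n₀).start = (ℓ₀, ν') := histOf_start G σ' τ' _ n₀
    have hacc : G.accCost (G.histOf σ τ (ℓ₀, ν) n₀) =
        (ν' - ν) * (G.price ℓ₀ : ℝ) + G.accCost (G.histOf σ' τ' (ℓ₀, ν') n₀) := by
      rw [heq]
      exact accCost_sh G ℓ₀ ν ν' _ hne hstart'
    have hlast : (G.histOf σ τ (ℓ₀, ν) n₀).last = (G.histOf σ' τ' (ℓ₀, ν') n₀).last := by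
      rw [heq]
      exact shHist_last G ℓ₀ ν ν' _ hne
    rw [hfind, hacc, hlast, ← EReal.coe_add]
    congr 1
    ring
  · have hx : ¬ ∃ n, G.owner ((G.histOf σ τ (ℓ₀, ν) n).last.1) = Owner.final := by
      intro ⟨n, hn⟩
      exact hx' ⟨n, by rw [← hl1 n]; exact hn⟩
    rw [dif_neg hx, dif_neg hx']
    rfl

end SlopeCost


/-- Lemma 4: in an `r`-SPTG, for every non-urgent location `ℓ` of Min
and every non-urgent location `ℓ'` of Max, and all `0 ≤ ν < ν' ≤ r`,
`Val_G(ℓ,ν) ≤ (ν'−ν)·π(ℓ) + Val_G(ℓ,ν')` and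
`Val_G(ℓ',ν) ≥ (ν'−ν)·π(ℓ') + Val_G(ℓ',ν')`. -/
theorem slope_bounds (G : PTG) (hwf : G.WF) (r : ℚ) (hsptg : G.IsSPTG (r : ℝ))
    (ℓ ℓ' : G.Loc)
    (hℓ : G.owner ℓ = Owner.min) (hℓu : G.urgent ℓ = false)
    (hℓ' : G.owner ℓ' = Owner.max) (hℓ'u : G.urgent ℓ' = false)
    (ν ν' : ℝ) (h0 : 0 ≤ ν) (hlt : ν < ν') (hr : ν' ≤ (r : ℝ)) :
    G.val (ℓ, ν) ≤ ((((ν' - ν) * (G.price ℓ : ℝ)) : ℝ) : EReal) + G.val (ℓ, ν') ∧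
    ((((ν' - ν) * (G.price ℓ' : ℝ)) : ℝ) : EReal) + G.val (ℓ', ν') ≤ G.val (ℓ', ν) := by
  have hle : ν ≤ ν' := le_of_lt hlt
  have hreset : ∀ δ ∈ G.trans, δ.reset = false := fun δ hδ => (hsptg.2.2 δ hδ).2.2.2.2
  have hrM : (r : ℝ) ≤ (G.M : ℝ) := by
    obtain ⟨s', t, δ, c, mv⟩ :=
      hwf.2.2.2.2 ℓ 0 (by rw [hℓ]; simp) le_rfl (Nat.cast_nonneg _)
    have h1 := (hsptg.2.2 δ mv.1).2.1
    have h2 := (hwf.2.1 δ mv.1).2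
    linarith
  have hM : ν' ≤ (G.M : ℝ) := le_trans hr hrM
  constructor
  · -- Min side
    have hfinℓ : G.owner ℓ ≠ Owner.final := by rw [hℓ]; simp
    show G.lval (ℓ, ν) ≤ ((((ν' - ν) * (G.price ℓ : ℝ)) : ℝ) : EReal) + G.lval (ℓ, ν')
    show (⨆ τ : {τ : StratFun G.Loc // G.MaxValid τ}, G.maxValue τ.1 (ℓ, ν)) ≤
      ((((ν' - ν) * (G.price ℓ : ℝ)) : ℝ) : EReal) + G.lval (ℓ, ν')
    apply iSup_le
    rintro ⟨τ, hτ⟩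
    have hτ' : G.MaxValid (compStrat G ℓ ν ν' τ) :=
      compStrat_valid G ℓ ν ν' Owner.max (by rw [hℓ]; simp) τ hτ hreset hℓu h0 hle hM
    have key : ∀ σ' : StratFun G.Loc, G.MinValid σ' →
        G.playCost (shiftStrat G ℓ ν ν' hwf σ') τ (ℓ, ν) =
          ((((ν' - ν) * (G.price ℓ : ℝ)) : ℝ) : EReal) +
            G.playCost σ' (compStrat G ℓ ν ν' τ) (ℓ, ν') := by
      intro σ' hσ'
      apply playCost_corr G ℓ ν ν' hwf hreset hfinℓ hℓu h0 hle hM _ _ _ _ hσ' hτ'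
      · intro h' hv hs _
        exact shiftStrat_corr G ℓ ν ν' hwf (ne_of_lt hlt) σ' h' hv hs
      · intro h' _ hs hown
        have hne : h'.steps ≠ [] := by
          intro hnil
          have hl : h'.last = h'.start := by rw [Hist.last, hnil]; rfl
          rw [hl, hs] at hown
          simp [hℓ] at hown
        exact compStrat_corr G ℓ ν ν' τ h' hs hne
    have hmv : ∀ σ' : StratFun G.Loc, G.MinValid σ' →
        G.MinValid (shiftStrat G ℓ ν ν' hwf σ') := fun σ' hσ' =>
      shiftStrat_valid G ℓ ν ν' hwf Owner.min (by simp) σ' hσ' hreset hℓu h0 hle hM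
    have step2 : (((-((ν' - ν) * (G.price ℓ : ℝ)) : ℝ)) : EReal) + G.maxValue τ (ℓ, ν) ≤
        G.maxValue (compStrat G ℓ ν ν' τ) (ℓ, ν') := by
      show _ ≤ ⨅ σ' : {σ : StratFun G.Loc // G.MinValid σ},
        G.playCost σ'.1 (compStrat G ℓ ν ν' τ) (ℓ, ν')
      apply le_iInf
      rintro ⟨σ', hσ'⟩
      have h1 : G.maxValue τ (ℓ, ν) ≤
          G.playCost (shiftStrat G ℓ ν ν' hwf σ') τ (ℓ, ν) := by
        show (⨅ σ : {σ : StratFun G.Loc // G.MinValid σ}, G.playCost σ.1 τ (ℓ, ν)) ≤ _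
        exact iInf_le _ (⟨shiftStrat G ℓ ν ν' hwf σ', hmv σ' hσ'⟩ :
          {σ : StratFun G.Loc // G.MinValid σ})
      rw [key σ' hσ'] at h1
      calc (((-((ν' - ν) * (G.price ℓ : ℝ)) : ℝ)) : EReal) + G.maxValue τ (ℓ, ν)
          ≤ (((-((ν' - ν) * (G.price ℓ : ℝ)) : ℝ)) : EReal) +
            (((((ν' - ν) * (G.price ℓ : ℝ)) : ℝ) : EReal) +
              G.playCost σ' (compStrat G ℓ ν ν' τ) (ℓ, ν')) := add_le_add_right h1 _
        _ = G.playCost σ' (compStrat G ℓ ν ν' τ) (ℓ, ν') := ereal_cancel' _ _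
    calc G.maxValue τ (ℓ, ν)
        = ((((ν' - ν) * (G.price ℓ : ℝ)) : ℝ) : EReal) +
            ((((-((ν' - ν) * (G.price ℓ : ℝ)) : ℝ)) : EReal) + G.maxValue τ (ℓ, ν)) :=
          (ereal_cancel _ _).symm
      _ ≤ ((((ν' - ν) * (G.price ℓ : ℝ)) : ℝ) : EReal) +
            G.maxValue (compStrat G ℓ ν ν' τ) (ℓ, ν') := add_le_add_right step2 _
      _ ≤ ((((ν' - ν) * (G.price ℓ : ℝ)) : ℝ) : EReal) + G.lval (ℓ, ν') := by
          apply add_le_add_right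
          exact le_iSup (fun τ'' : {τ : StratFun G.Loc // G.MaxValid τ} =>
            G.maxValue τ''.1 (ℓ, ν')) ⟨compStrat G ℓ ν ν' τ, hτ'⟩
  · -- Max side
    have hfinℓ' : G.owner ℓ' ≠ Owner.final := by rw [hℓ']; simp
    show ((((ν' - ν) * (G.price ℓ' : ℝ)) : ℝ) : EReal) + G.lval (ℓ', ν') ≤ G.lval (ℓ', ν)
    have main : ∀ τ' : {τ : StratFun G.Loc // G.MaxValid τ},
        ((((ν' - ν) * (G.price ℓ' : ℝ)) : ℝ) : EReal) + G.maxValue τ'.1 (ℓ', ν') ≤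
          G.lval (ℓ', ν) := by
      rintro ⟨τ', hτ'⟩
      have hτ : G.MaxValid (shiftStrat G ℓ' ν ν' hwf τ') :=
        shiftStrat_valid G ℓ' ν ν' hwf Owner.max (by simp) τ' hτ' hreset hℓ'u h0 hle hM
      have hcv : ∀ σ : StratFun G.Loc, G.MinValid σ →
          G.MinValid (compStrat G ℓ' ν ν' σ) := fun σ hσ =>
        compStrat_valid G ℓ' ν ν' Owner.min (by rw [hℓ']; simp) σ hσ hreset hℓ'u h0 hle hM
      have key : ∀ σ : StratFun G.Loc, G.MinValid σ →
          G.playCost σ (shiftStrat G ℓ' ν ν' hwf τ') (ℓ', ν) =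
            ((((ν' - ν) * (G.price ℓ' : ℝ)) : ℝ) : EReal) +
              G.playCost (compStrat G ℓ' ν ν' σ) τ' (ℓ', ν') := by
        intro σ hσ
        apply playCost_corr G ℓ' ν ν' hwf hreset hfinℓ' hℓ'u h0 hle hM _ _ _ _
          (hcv σ hσ) hτ'
        · intro h' _ hs hown
          have hne : h'.steps ≠ [] := by
            intro hnil
            have hl : h'.last = h'.start := by rw [Hist.last, hnil]; rfl
            rw [hl, hs] at hown
            simp [hℓ'] at hown
          exact compStrat_corr G ℓ' ν ν' σ h' hs hne
        · intro h' hv hs _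
          exact shiftStrat_corr G ℓ' ν ν' hwf (ne_of_lt hlt) τ' h' hv hs
      have step1 : ((((ν' - ν) * (G.price ℓ' : ℝ)) : ℝ) : EReal) +
          G.maxValue τ' (ℓ', ν') ≤ G.maxValue (shiftStrat G ℓ' ν ν' hwf τ') (ℓ', ν) := by
        show _ ≤ ⨅ σ : {σ : StratFun G.Loc // G.MinValid σ},
          G.playCost σ.1 (shiftStrat G ℓ' ν ν' hwf τ') (ℓ', ν)
        apply le_iInf
        rintro ⟨σ, hσ⟩
        rw [key σ hσ]
        apply add_le_add_right
        show (⨅ σ'' : {σ'' : StratFun G.Loc // G.MinValid σ''},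
          G.playCost σ''.1 τ' (ℓ', ν')) ≤ _
        exact iInf_le _ (⟨compStrat G ℓ' ν ν' σ, hcv σ hσ⟩ :
          {σ'' : StratFun G.Loc // G.MinValid σ''})
      refine le_trans step1 ?_
      exact le_iSup (fun τ'' : {τ : StratFun G.Loc // G.MaxValid τ} =>
        G.maxValue τ''.1 (ℓ', ν)) ⟨shiftStrat G ℓ' ν ν' hwf τ', hτ⟩
    have h2 : G.lval (ℓ', ν') ≤
        (((-((ν' - ν) * (G.price ℓ' : ℝ)) : ℝ)) : EReal) + G.lval (ℓ', ν) := by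
      show (⨆ τ'' : {τ : StratFun G.Loc // G.MaxValid τ}, G.maxValue τ''.1 (ℓ', ν')) ≤ _
      apply iSup_le
      intro τ'
      have h3 := add_le_add_right (main τ') ((((-((ν' - ν) * (G.price ℓ' : ℝ)) : ℝ)) : EReal))
      rw [ereal_cancel'] at h3
      exact h3
    calc ((((ν' - ν) * (G.price ℓ' : ℝ)) : ℝ) : EReal) + G.lval (ℓ', ν')
        ≤ ((((ν' - ν) * (G.price ℓ' : ℝ)) : ℝ) : EReal) +
            ((((-((ν' - ν) * (G.price ℓ' : ℝ)) : ℝ)) : EReal) + G.lval (ℓ', ν)) :=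
          add_le_add_right h2 _
      _ = G.lval (ℓ', ν) := ereal_cancel _ _

end PTGPaper
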